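/- Let σ be a permutation of {1,…,r} which is not the identity and which has at least one fixed point. Then there exist i, j ∈ {1,…,r} with σ(i) ≠ i and σ(j) = j such that the permutation σ' = σ ∘ (i j) (σ composed with the transposition of i and j) satisfies c_<(σ') = c_<(σ) + 1 and c_>(σ') = c_>(σ). -/

import Mathlib

open scoped BigOperators

namespace PermStats

/-- The number of drops `c_<(σ) = #{i : σ(i) < i}` of a permutation of `Fin r`. -/
def drops {r : ℕ} (σ : Equiv.Perm (Fin r)) : ℕ :=
  (Finset.univ.filter fun i => σ i < i).card

/-- The number of jumps `c_>(σ) = #{i : σ(i) > i}` of a permutation of `Fin r`. -/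
def jumps {r : ℕ} (σ : Equiv.Perm (Fin r)) : ℕ :=
  (Finset.univ.filter fun i => i < σ i).card

/-- The height `ht(σ) = ∑_i |σ(i) - i|` of a permutation of `Fin r`. -/
def ht {r : ℕ} (σ : Equiv.Perm (Fin r)) : ℕ :=
  ∑ i : Fin r, Nat.dist ((σ i : ℕ)) (i : ℕ)

lemma split_card {r : ℕ} (i j : Fin r) (hij : i ≠ j) (p : Fin r → Prop) [DecidablePred p] :
    (Finset.univ.filter p).card
      = ((Finset.univ \ {i, j}).filter p).card
        + ((if p i then 1 else 0) + (if p j then 1 else 0)) := by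
  have hu : (Finset.univ : Finset (Fin r)) = (Finset.univ \ {i, j}) ∪ {i, j} := by
    rw [Finset.sdiff_union_of_subset (Finset.subset_univ _)]
  have hd : Disjoint ((Finset.univ \ {i, j}).filter p) (({i, j} : Finset (Fin r)).filter p) :=
    Finset.disjoint_filter_filter (Finset.sdiff_disjoint)
  conv_lhs => rw [hu]
  rw [Finset.filter_union, Finset.card_union_of_disjoint hd]
  congr 1
  have h2 : ({i, j} : Finset (Fin r)) = insert i {j} := rfl
  rw [h2, Finset.filter_insert, Finset.filter_singleton]
  by_cases hi : p i <;> by_cases hj : p j <;>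
    simp [hi, hj, Finset.card_insert_of_notMem, hij]

lemma key {r : ℕ} (σ : Equiv.Perm (Fin r)) (i j : Fin r) (hij : i ≠ j) (hj : σ j = j)
    (h1 : (if j < i then 1 else 0) + (if σ i < j then 1 else 0)
        = (if σ i < i then 1 else 0) + 1)
    (h2 : (if i < j then 1 else 0) + (if j < σ i then 1 else 0)
        = (if i < σ i then 1 else 0)) :
    drops (σ * Equiv.swap i j) = drops σ + 1 ∧ jumps (σ * Equiv.swap i j) = jumps σ := by
  set τ := σ * Equiv.swap i j with hτ
  have hτi : τ i = j := by simp [hτ, Equiv.Perm.mul_apply, Equiv.swap_apply_left, hj]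
  have hτj : τ j = σ i := by simp [hτ, Equiv.Perm.mul_apply, Equiv.swap_apply_right]
  have hτx : ∀ x, x ≠ i → x ≠ j → τ x = σ x := by
    intro x hxi hxj
    simp [hτ, Equiv.Perm.mul_apply, Equiv.swap_apply_of_ne_of_ne hxi hxj]
  have hoffd : ((Finset.univ \ {i, j}).filter (fun x => τ x < x))
      = ((Finset.univ \ {i, j}).filter (fun x => σ x < x)) := by
    apply Finset.filter_congr
    intro x hx
    simp only [Finset.mem_sdiff, Finset.mem_insert, Finset.mem_singleton] at hx
    rw [hτx x (fun h => hx.2 (Or.inl h)) (fun h => hx.2 (Or.inr h))]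
  have hoffj : ((Finset.univ \ {i, j}).filter (fun x => x < τ x))
      = ((Finset.univ \ {i, j}).filter (fun x => x < σ x)) := by
    apply Finset.filter_congr
    intro x hx
    simp only [Finset.mem_sdiff, Finset.mem_insert, Finset.mem_singleton] at hx
    rw [hτx x (fun h => hx.2 (Or.inl h)) (fun h => hx.2 (Or.inr h))]
  constructor
  · rw [drops, drops, split_card i j hij (fun x => τ x < x),
      split_card i j hij (fun x => σ x < x), hoffd]
    simp only [hτi, hτj, hj, lt_self_iff_false, if_false]
    omega
  · rw [jumps, jumps, split_card i j hij (fun x => x < τ x),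
      split_card i j hij (fun x => x < σ x), hoffj]
    simp only [hτi, hτj, hj, lt_self_iff_false, if_false]
    omega

/-- If the permutation `σ` of `{1,…,r}` is not the identity but has a
fixed point, then there are `i`, `j` with `σ(i) ≠ i`, `σ(j) = j` such that
`σ' = σ ∘ (i j)` (transposition applied first, i.e. `σ * Equiv.swap i j`) has one more
drop and the same number of jumps as `σ`. -/
theorem exists_swap_add_drop (r : ℕ) (σ : Equiv.Perm (Fin r)) (hne : σ ≠ 1)
    (hfix : ∃ j, σ j = j) :
    ∃ i j : Fin r, σ i ≠ i ∧ σ j = j ∧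
      drops (σ * Equiv.swap i j) = drops σ + 1 ∧ jumps (σ * Equiv.swap i j) = jumps σ := by
  obtain ⟨j, hj⟩ := hfix
  have hmap : ∀ x, σ x ≠ x → σ (σ x) ≠ σ x := fun x hx h => hx (σ.injective h)
  by_cases hU : (Finset.univ.filter (fun x => σ x ≠ x ∧ j < x)).Nonempty
  · set U := Finset.univ.filter (fun x => σ x ≠ x ∧ j < x) with hUdef
    obtain ⟨i, hiU, hmin⟩ := U.exists_min_image id hU
    rw [hUdef, Finset.mem_filter] at hiU
    obtain ⟨-, hi_ne, hji⟩ := hiU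
    have hij : i ≠ j := fun h => (lt_irrefl j (h ▸ hji))
    refine ⟨i, j, hi_ne, hj, ?_⟩
    have hsi_ne : σ (σ i) ≠ σ i := hmap i hi_ne
    rcases lt_trichotomy (σ i) j with hA | hE | hB
    · apply key σ i j hij hj
      · rw [if_pos hji, if_pos hA, if_pos (hA.trans hji)]
      · rw [if_neg (asymm hji), if_neg (asymm hA), if_neg (asymm (hA.trans hji))]
    · exact absurd (σ.injective (hE.trans hj.symm)) hij
    · have hmem : σ i ∈ U := by
        rw [hUdef, Finset.mem_filter]
        exact ⟨Finset.mem_univ _, hsi_ne, hB⟩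
      have hle : i ≤ σ i := hmin _ hmem
      have hlt : i < σ i := lt_of_le_of_ne hle (Ne.symm hi_ne)
      apply key σ i j hij hj
      · rw [if_pos hji, if_neg (asymm hB), if_neg (asymm hlt)]
      · rw [if_neg (asymm hji), if_pos hB, if_pos hlt]
  · have hall : ∀ x, σ x ≠ x → x < j := by
      intro x hx
      by_contra h
      push_neg at h
      have hxj : j < x := lt_of_le_of_ne h (fun he => hx (he ▸ hj))
      exact hU ⟨x, Finset.mem_filter.mpr ⟨Finset.mem_univ _, hx, hxj⟩⟩
    have hN : (Finset.univ.filter (fun x => σ x ≠ x)).Nonempty := by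
      by_contra h
      rw [Finset.not_nonempty_iff_eq_empty, Finset.filter_eq_empty_iff] at h
      apply hne
      apply Equiv.Perm.ext
      intro x
      rw [Equiv.Perm.one_apply]
      exact not_not.mp (h (Finset.mem_univ x))
    obtain ⟨i, hiN, hmin⟩ := Finset.exists_min_image _ id hN
    rw [Finset.mem_filter] at hiN
    have hi_ne : σ i ≠ i := hiN.2
    have hsi_ne : σ (σ i) ≠ σ i := hmap i hi_ne
    have hle : i ≤ σ i := hmin _ (Finset.mem_filter.mpr ⟨Finset.mem_univ _, hsi_ne⟩)
    have hlt : i < σ i := lt_of_le_of_ne hle (Ne.symm hi_ne)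
    have hsij : σ i < j := hall (σ i) hsi_ne
    have hij : i ≠ j := fun h => absurd (hall i hi_ne) (h ▸ lt_irrefl j)
    refine ⟨i, j, hi_ne, hj, ?_⟩
    apply key σ i j hij hj
    · rw [if_neg (asymm (hlt.trans hsij)), if_pos hsij, if_neg (asymm hlt)]
    · rw [if_pos (hlt.trans hsij), if_neg (asymm hsij), if_pos hlt]

end PermStats
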